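/- For every density matrix σ on ℂ² ⊗ ℂ², with x_{jk} = ⟨φʲ, σ φᵏ⟩, one has Tr((σ ⊗ σ)·K₃⁻) = Σ_{1≤j<k≤3} x_{jj}·x_{kk} − Σ_{1≤j<k≤3} |x_{jk}|². -/

import Mathlib

open Matrix
open scoped Matrix Kronecker ComplexOrder

noncomputable section

/-- Index type of `ℂ² ⊗ ℂ²`. -/
abbrev Q : Type := Fin 2 × Fin 2

/-- The standard basis vector `|ab⟩` of `ℂ² ⊗ ℂ²`. -/
def ket (a b : Fin 2) : Q → ℂ := fun p => if p = (a, b) then 1 else 0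

/-- The Bell basis `φ⁰, φ¹, φ², φ³` of `ℂ² ⊗ ℂ²`. -/
def bell : Fin 4 → Q → ℂ
  | 0 => fun p => (ket 0 0 p + ket 1 1 p) / (Real.sqrt 2 : ℂ)
  | 1 => fun p => Complex.I * (ket 0 1 p + ket 1 0 p) / (Real.sqrt 2 : ℂ)
  | 2 => fun p => (-ket 0 1 p + ket 1 0 p) / (Real.sqrt 2 : ℂ)
  | 3 => fun p => Complex.I * (ket 0 0 p - ket 1 1 p) / (Real.sqrt 2 : ℂ)

/-- The product basis `e^{jk} = φʲ ⊗ φᵏ` of `(ℂ²⊗ℂ²)⊗(ℂ²⊗ℂ²)`. -/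
def e (j k : Fin 4) : Q × Q → ℂ := fun pq => bell j pq.1 * bell k pq.2

/-- Rank-one operator `|v⟩⟨v|`. -/
def outer {m : Type*} (v : m → ℂ) : Matrix m m ℂ := vecMulVec v (star v)

/-- Orthogonal projection onto
`span{e^{jk}+e^{kj} : 1≤j<k≤3} ∪ {e^{11}−e^{22}, e^{22}−e^{33}}`. -/
def K5 : Matrix (Q × Q) (Q × Q) ℂ :=
  (1 / 2 : ℂ) • (outer (e 1 2 + e 2 1) + outer (e 2 3 + e 3 2) + outer (e 3 1 + e 1 3)) +
    (1 / 2 : ℂ) • outer (e 1 1 - e 2 2) +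
    (1 / 6 : ℂ) • outer (e 1 1 + e 2 2 - (2 : ℂ) • e 3 3)

/-- Orthogonal projection onto `span{e^{11}+e^{22}+e^{33}}`. -/
def K1 : Matrix (Q × Q) (Q × Q) ℂ :=
  (1 / 3 : ℂ) • outer (e 1 1 + e 2 2 + e 3 3)

/-- Orthogonal projection onto `span{e^{jk}−e^{kj} : 1≤j<k≤3}`. -/
def K3m : Matrix (Q × Q) (Q × Q) ℂ :=
  (1 / 2 : ℂ) • (outer (e 1 2 - e 2 1) + outer (e 2 3 - e 3 2) + outer (e 3 1 - e 1 3))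

/-- Orthogonal projection onto `span{e^{00}}`. -/
def L1 : Matrix (Q × Q) (Q × Q) ℂ := outer (e 0 0)

/-- Orthogonal projection onto `span{e^{0j}+e^{j0} : j=1,2,3}`. -/
def L3p : Matrix (Q × Q) (Q × Q) ℂ :=
  (1 / 2 : ℂ) • (outer (e 0 1 + e 1 0) + outer (e 0 2 + e 2 0) + outer (e 0 3 + e 3 0))

/-- Orthogonal projection onto `span{e^{0j}−e^{j0} : j=1,2,3}`. -/
def L3m : Matrix (Q × Q) (Q × Q) ℂ :=
  (1 / 2 : ℂ) • (outer (e 0 1 - e 1 0) + outer (e 0 2 - e 2 0) + outer (e 0 3 - e 3 0))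

/-- The matrix elements `x_{jk} = ⟨φʲ, σ φᵏ⟩` of a state `σ` in the Bell basis. -/
def x (σ : Matrix Q Q ℂ) (j k : Fin 4) : ℂ := star (bell j) ⬝ᵥ σ.mulVec (bell k)


lemma trace_mul_outer (A : Matrix (Q × Q) (Q × Q) ℂ) (v : Q × Q → ℂ) :
    (A * outer v).trace = star v ⬝ᵥ A.mulVec v := by
  simp only [Matrix.trace, Matrix.diag, Matrix.mul_apply, outer, vecMulVec_apply,
    dotProduct, mulVec, Pi.star_apply]
  refine Finset.sum_congr rfl fun i _ => ?_
  rw [Finset.mul_sum]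
  refine Finset.sum_congr rfl fun j _ => ?_
  ring

lemma dot_e (σ : Matrix Q Q ℂ) (j k l m : Fin 4) :
    star (e j k) ⬝ᵥ (σ ⊗ₖ σ).mulVec (e l m) = x σ j l * x σ k m := by
  have hv : (σ ⊗ₖ σ).mulVec (e l m) =
      fun pq : Q × Q => (σ.mulVec (bell l)) pq.1 * (σ.mulVec (bell m)) pq.2 := by
    funext pq
    simp only [mulVec, dotProduct]
    rw [Fintype.sum_prod_type, Finset.sum_mul_sum]
    refine Finset.sum_congr rfl fun r _ => ?_
    refine Finset.sum_congr rfl fun t _ => ?_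
    simp only [kroneckerMap_apply, e]
    ring
  rw [hv, x, x]
  simp only [dotProduct]
  rw [Fintype.sum_prod_type, Finset.sum_mul_sum]
  refine Finset.sum_congr rfl fun p _ => ?_
  refine Finset.sum_congr rfl fun q _ => ?_
  simp only [Pi.star_apply, e, star_mul']
  ring

lemma x_herm (σ : Matrix Q Q ℂ) (h : σᴴ = σ) (j k : Fin 4) :
    x σ k j = starRingEnd ℂ (x σ j k) := by
  simp only [x, dotProduct, mulVec, map_sum, _root_.map_mul, Pi.star_apply, RCLike.star_def, Complex.conj_conj,
    Finset.mul_sum]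
  rw [Finset.sum_comm]
  refine Finset.sum_congr rfl fun p _ => ?_
  refine Finset.sum_congr rfl fun q _ => ?_
  have : (starRingEnd ℂ) (σ p q) = σ q p := by
    conv_rhs => rw [← h]
    simp [Matrix.conjTranspose_apply]
  rw [this]; ring

lemma normsq_eq (z : ℂ) : ((‖z‖ : ℂ)) ^ 2 = z * starRingEnd ℂ z := by
  rw [Complex.mul_conj, Complex.normSq_eq_norm_sq]
  push_cast
  ring

/-- `Tr((σ⊗σ) K₃⁻) = Σ_{j<k} x_{jj} x_{kk} − Σ_{j<k} |x_{jk}|²`. -/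
theorem stmt9 (σ : Matrix Q Q ℂ) (hσ : σ.PosSemidef) (htr : σ.trace = 1) :
    ((σ ⊗ₖ σ) * K3m).trace =
      (x σ 1 1 * x σ 2 2 + x σ 1 1 * x σ 3 3 + x σ 2 2 * x σ 3 3) -
      (((‖x σ 1 2‖ : ℂ)) ^ 2 + ((‖x σ 1 3‖ : ℂ)) ^ 2 + ((‖x σ 2 3‖ : ℂ)) ^ 2) := by
  have hh := hσ.isHermitian.eq
  have h12 : x σ 2 1 = starRingEnd ℂ (x σ 1 2) := x_herm σ hh 1 2
  have h13 : x σ 3 1 = starRingEnd ℂ (x σ 1 3) := x_herm σ hh 1 3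
  have h23 : x σ 3 2 = starRingEnd ℂ (x σ 2 3) := x_herm σ hh 2 3
  rw [normsq_eq, normsq_eq, normsq_eq, K3m]
  rw [Matrix.mul_smul, Matrix.trace_smul, Matrix.mul_add, Matrix.mul_add,
    Matrix.trace_add, Matrix.trace_add, trace_mul_outer, trace_mul_outer, trace_mul_outer]
  simp only [star_sub, sub_dotProduct, dotProduct_sub, mulVec_sub, dot_e]
  rw [h12, h13, h23]
  simp only [smul_eq_mul]
  ring
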